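/- arXiv:1506.02356 — 3 statements merged into one kernel-verified Lean document; each statement's English description precedes it below -/
import Mathlib

section
/- (Vaserstein's lemma) Let A be a commutative ring, n ≥ 3, and let a, b, c ∈ A^n with a·b^t = a·c^t = 1. Then the matrix α = I_n + (c − b)^t a has determinant 1 and satisfies α b^t = c^t; moreover, the matrix β(X) = I_n + (c − b)^t a X over A[X] satisfies β(0) = I_n and β(1) = α, so α is connected to the identity. -/
open Polynomial

theorem stmt_5 {A : Type*} [CommRing A] {n : ℕ} (hn : 3 ≤ n) (a b c : Fin n → A)
    (hab : ∑ i, a i * b i = 1) (hac : ∑ i, a i * c i = 1) :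
    (1 + Matrix.vecMulVec (c - b) a).det = 1 ∧
    (1 + Matrix.vecMulVec (c - b) a).mulVec b = c ∧
    (1 + Matrix.vecMulVec (fun i => C (c i - b i)) (fun i => C (a i) * X)).map
        (Polynomial.eval 0) = 1 ∧
    (1 + Matrix.vecMulVec (fun i => C (c i - b i)) (fun i => C (a i) * X)).map
        (Polynomial.eval 1) = 1 + Matrix.vecMulVec (c - b) a := by
  refine ⟨?_, ?_, ?_, ?_⟩
  · rw [Matrix.vecMulVec_eq (Fin 1), Matrix.det_one_add_replicateCol_mul_replicateRow]
    have : dotProduct a (c - b) = 0 := by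
      simp only [dotProduct, Pi.sub_apply, mul_sub, Finset.sum_sub_distrib, hab, hac,
        sub_self]
    rw [show dotProduct a (c - b) = 0 from this, add_zero]
  · rw [Matrix.add_mulVec, Matrix.one_mulVec]
    funext i
    simp only [Pi.add_apply, Matrix.mulVec, dotProduct, Matrix.vecMulVec_apply,
      Pi.sub_apply, mul_assoc, ← Finset.mul_sum, hab, mul_one, Matrix.of_apply]
    ring
  · ext i j
    simp only [Matrix.map_apply, Matrix.add_apply, Matrix.vecMulVec_apply, Matrix.one_apply,
      eval_add, eval_mul, eval_C, eval_X, mul_zero, zero_mul, add_zero]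
    split <;> simp
  · ext i j
    simp only [Matrix.map_apply, Matrix.add_apply, Matrix.vecMulVec_apply, Matrix.one_apply,
      Pi.sub_apply, eval_add, eval_mul, eval_C, eval_X, mul_one]
    split <;> simp
end

section
/- Let A = ℝ[X, Y]/(X² + Y² − 1) with x, y the images of X, Y. Then the unimodular row (x, y) ∈ A² cannot be lifted to a unimodular row over ℝ[X, Y]: there is no matrix β ∈ SL_2(ℝ[X,Y]) reducing modulo (X² + Y² − 1) to the matrix [[x, y], [−y, x]]. -/
set_option maxHeartbeats 1000000

open MvPolynomial

/-- The defining polynomial of the circle, `X² + Y² - 1`. -/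
noncomputable def circlePoly : MvPolynomial (Fin 2) ℝ :=
  X 0 ^ 2 + X 1 ^ 2 - 1

/-- The canonical surjection `ℝ[X,Y] → ℝ[X,Y]/(X² + Y² - 1)`. -/
noncomputable def circleMk :
    MvPolynomial (Fin 2) ℝ →+* MvPolynomial (Fin 2) ℝ ⧸ Ideal.span {circlePoly} :=
  Ideal.Quotient.mk (Ideal.span {circlePoly})

/-- The algebraic θ-derivative on `ℝ[r, c, s]` with `c = cos θ`, `s = sin θ`. -/
noncomputable def dOp (Q : MvPolynomial (Fin 3) ℝ) : MvPolynomial (Fin 3) ℝ :=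
  (-X 2) * pderiv 1 Q + X 1 * pderiv 2 Q

lemma dOp_add (P Q : MvPolynomial (Fin 3) ℝ) : dOp (P + Q) = dOp P + dOp Q := by
  simp [dOp]; ring

lemma hasDerivAt_evalCS (Q : MvPolynomial (Fin 3) ℝ) (r θ : ℝ) :
    HasDerivAt (fun t => eval ![r, Real.cos t, Real.sin t] Q)
      (eval ![r, Real.cos θ, Real.sin θ] (dOp Q)) θ := by
  induction Q using MvPolynomial.induction_on with
  | C a => simpa [dOp] using hasDerivAt_const θ a
  | add p q hp hq => simpa [dOp_add] using hp.fun_add hq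
  | mul_X p n hp =>
      have hX : HasDerivAt (fun t => eval ![r, Real.cos t, Real.sin t] (X n : MvPolynomial (Fin 3) ℝ))
          (eval ![r, Real.cos θ, Real.sin θ] (dOp (X n))) θ := by
        fin_cases n
        · simpa [dOp] using hasDerivAt_const θ r
        · simpa [dOp, pderiv_X] using (Real.hasDerivAt_cos θ)
        · simpa [dOp, pderiv_X] using (Real.hasDerivAt_sin θ)
      have := hp.fun_mul hX
      have hd : dOp (p * X n) = dOp p * X n + p * dOp (X n) := by
        simp only [dOp, pderiv_mul]; ring
      simpa [hd] using this

lemma continuous_evalCS (Q : MvPolynomial (Fin 3) ℝ) :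
    Continuous (fun p : ℝ × ℝ => eval ![p.1, Real.cos p.2, Real.sin p.2] Q) := by
  apply (MvPolynomial.continuous_eval (p := Q)).comp
  refine continuous_pi fun i => ?_
  fin_cases i
  · exact continuous_fst
  · exact Real.continuous_cos.comp continuous_snd
  · exact Real.continuous_sin.comp continuous_snd

/-- substitution x ↦ r c, y ↦ r s -/
noncomputable def subCS (p : MvPolynomial (Fin 2) ℝ) : MvPolynomial (Fin 3) ℝ :=
  aeval ![X 0 * X 1, X 0 * X 2] p

lemma eval_subCS (p : MvPolynomial (Fin 2) ℝ) (r c s : ℝ) :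
    eval ![r, c, s] (subCS p) = eval ![r * c, r * s] p := by
  induction p using MvPolynomial.induction_on with
  | C a => simp [subCS]
  | add p q hp hq => simp only [subCS, map_add] at *; rw [hp, hq]
  | mul_X p n hp =>
      simp only [subCS, map_mul] at *
      rw [hp]
      congr 1
      fin_cases n <;> simp

open Real Complex in
lemma winding (f g : MvPolynomial (Fin 2) ℝ)
    (hnz : ∀ v : Fin 2 → ℝ, eval v f = 0 → eval v g = 0 → False)
    (hf : ∀ θ : ℝ, eval ![Real.cos θ, Real.sin θ] f = Real.cos θ)
    (hg : ∀ θ : ℝ, eval ![Real.cos θ, Real.sin θ] g = Real.sin θ) : False := by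
  set F := subCS f with hF
  set G2 := subCS g with hG2
  set A : ℝ → ℝ → ℝ := fun r t => eval ![r, Real.cos t, Real.sin t] F with hA
  set A' : ℝ → ℝ → ℝ := fun r t => eval ![r, Real.cos t, Real.sin t] (dOp F) with hA'
  set B : ℝ → ℝ → ℝ := fun r t => eval ![r, Real.cos t, Real.sin t] G2 with hB
  set B' : ℝ → ℝ → ℝ := fun r t => eval ![r, Real.cos t, Real.sin t] (dOp G2) with hB'
  set Gc : ℝ → ℝ → ℂ := fun r t => (A r t : ℂ) + (B r t : ℂ) * I with hGc
  set Gc' : ℝ → ℝ → ℂ := fun r t => (A' r t : ℂ) + (B' r t : ℂ) * I with hGc'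
  have hAval : ∀ r t, A r t = eval ![r * Real.cos t, r * Real.sin t] f := by
    intro r t; simp [hA, hF, eval_subCS]
  have hBval : ∀ r t, B r t = eval ![r * Real.cos t, r * Real.sin t] g := by
    intro r t; simp [hB, hG2, eval_subCS]
  have hGne : ∀ r t, Gc r t ≠ 0 := by
    intro r t h0
    rw [hGc] at h0
    simp only [Complex.ext_iff, Complex.add_re, Complex.add_im, Complex.ofReal_re,
      Complex.ofReal_im, Complex.mul_re, Complex.mul_im, Complex.I_re, Complex.I_im,
      Complex.zero_re, Complex.zero_im] at h0
    have hA0 : A r t = 0 := by linarith [h0.1]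
    have hB0 : B r t = 0 := by linarith [h0.2]
    exact hnz _ (hAval r t ▸ hA0) (hBval r t ▸ hB0)
  have hDeriv : ∀ r t, HasDerivAt (Gc r) (Gc' r t) t := by
    intro r t
    exact ((hasDerivAt_evalCS F r t).ofReal_comp).add
      (((hasDerivAt_evalCS G2 r t).ofReal_comp).mul_const I)
  set Φ : ℝ → ℝ → ℂ := fun r t => Gc' r t / Gc r t with hΦ
  have hΦcont : Continuous (Function.uncurry Φ) := by
    apply Continuous.div
    · exact ((Complex.continuous_ofReal.comp (continuous_evalCS (dOp F))).add
        ((Complex.continuous_ofReal.comp (continuous_evalCS (dOp G2))).mul continuous_const))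
    · exact ((Complex.continuous_ofReal.comp (continuous_evalCS F)).add
        ((Complex.continuous_ofReal.comp (continuous_evalCS G2)).mul continuous_const))
    · exact fun p => hGne p.1 p.2
  set u : ℝ → ℂ := fun r => ∫ t in (0:ℝ)..(2*π), Φ r t with hu
  have hucont : Continuous u :=
    intervalIntegral.continuous_parametric_intervalIntegral_of_continuous' hΦcont 0 (2*π)
  -- each u r is an integer multiple of 2πI
  have hint : ∀ r, ∃ n : ℤ, u r = n * (2*π*I) := by
    intro r
    have hΦrcont : Continuous (Φ r) := by
      have h := hΦcont.comp (Continuous.prodMk_right r)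
      simpa [Function.uncurry_def, Function.comp_def] using h
    set L : ℝ → ℂ := fun t => ∫ s in (0:ℝ)..t, Φ r s with hL
    have hLd : ∀ t, HasDerivAt L (Φ r t) t := by
      intro t
      exact intervalIntegral.integral_hasDerivAt_right
        (hΦrcont.intervalIntegrable _ _)
        (hΦrcont.stronglyMeasurableAtFilter _ _) hΦrcont.continuousAt
    set h : ℝ → ℂ := fun t => Gc r t * Complex.exp (-(L t)) with hh
    have hhd : ∀ t, HasDerivAt h 0 t := by
      intro t
      have hd := (hDeriv r t).mul (((hLd t).neg).cexp)
      have : Gc' r t * Complex.exp (-L t) + Gc r t * (Complex.exp (-L t) * -Φ r t) = 0 := by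
        rw [hΦ]
        field_simp [hGne r t]
        ring
      rw [show Gc' r t * cexp ((-L) t) + Gc r t * (cexp ((-L) t) * -Φ r t) = 0 from this] at hd; exact hd
    have hconst : h (2*π) = h 0 :=
      is_const_of_deriv_eq_zero (fun t => (hhd t).differentiableAt)
        (fun t => (hhd t).deriv) _ _
    have hGper : Gc r (2*π) = Gc r 0 := by
      simp [hGc, hA, hB, Real.cos_two_pi, Real.sin_two_pi]
    have hL0 : L 0 = 0 := intervalIntegral.integral_same
    have hconst' : Gc r (2*π) * Complex.exp (-(L (2*π))) = Gc r 0 * Complex.exp (-(L 0)) :=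
      hconst
    rw [hL0, neg_zero, Complex.exp_zero, mul_one, hGper] at hconst'
    have hexp : Complex.exp (-(L (2*π))) = 1 := by
      rcases mul_left_cancel₀ (hGne r 0) (hconst'.trans (mul_one _).symm) with h1
      exact h1
    rw [Complex.exp_eq_one_iff] at hexp
    obtain ⟨n, hn⟩ := hexp
    exact ⟨-n, by rw [hu]; show L (2*π) = _; push_cast; linear_combination -hn⟩
  -- u 1 = 2 π I
  have hu1 : u 1 = 2*π*I := by
    have hA1 : ∀ t, A 1 t = Real.cos t := by
      intro t; rw [hAval]; simpa using hf t
    have hB1 : ∀ t, B 1 t = Real.sin t := by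
      intro t; rw [hBval]; simpa using hg t
    have hA'1 : ∀ t, A' 1 t = -Real.sin t := by
      intro t
      have h1 : HasDerivAt (fun t => Real.cos t) (A' 1 t) t := by
        have := hasDerivAt_evalCS F 1 t
        exact this.congr_of_eventuallyEq (Filter.Eventually.of_forall fun s => (hA1 s).symm)
      exact h1.unique (Real.hasDerivAt_cos t)
    have hB'1 : ∀ t, B' 1 t = Real.cos t := by
      intro t
      have h1 : HasDerivAt (fun t => Real.sin t) (B' 1 t) t := by
        have := hasDerivAt_evalCS G2 1 t
        exact this.congr_of_eventuallyEq (Filter.Eventually.of_forall fun s => (hB1 s).symm)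
      exact h1.unique (Real.hasDerivAt_sin t)
    have hΦ1 : ∀ t, Φ 1 t = I := by
      intro t
      show Gc' 1 t / Gc 1 t = I
      rw [div_eq_iff (hGne 1 t)]
      show (A' 1 t : ℂ) + (B' 1 t : ℂ) * I = I * ((A 1 t : ℂ) + (B 1 t : ℂ) * I)
      rw [hA'1, hB'1, hA1, hB1]
      push_cast
      ring_nf
      rw [Complex.I_sq]
      ring
    rw [hu]
    simp only [hΦ1]
    rw [intervalIntegral.integral_const]
    rw [sub_zero, Complex.real_smul]
    push_cast
    ring
  -- u 0 = 0
  have hu0 : u 0 = 0 := by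
    have hA'0 : ∀ t, A' 0 t = 0 := by
      intro t
      have h1 : HasDerivAt (fun _ : ℝ => eval ![(0:ℝ), 0] f) (A' 0 t) t := by
        have := hasDerivAt_evalCS F 0 t
        rwa [show (fun s => eval ![0, Real.cos s, Real.sin s] F) =
            fun _ : ℝ => eval ![(0:ℝ), 0] f from
          funext fun s => by rw [hF, eval_subCS]; norm_num] at this
      exact h1.unique (hasDerivAt_const t _)
    have hB'0 : ∀ t, B' 0 t = 0 := by
      intro t
      have h1 : HasDerivAt (fun _ : ℝ => eval ![(0:ℝ), 0] g) (B' 0 t) t := by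
        have := hasDerivAt_evalCS G2 0 t
        rwa [show (fun s => eval ![0, Real.cos s, Real.sin s] G2) =
            fun _ : ℝ => eval ![(0:ℝ), 0] g from
          funext fun s => by rw [hG2, eval_subCS]; norm_num] at this
      exact h1.unique (hasDerivAt_const t _)
    have hΦ0 : ∀ t, Φ 0 t = 0 := by
      intro t
      show Gc' 0 t / Gc 0 t = 0
      have : Gc' 0 t = 0 := by
        show (A' 0 t : ℂ) + (B' 0 t : ℂ) * I = 0
        rw [hA'0, hB'0]; simp
      rw [this, zero_div]
    rw [hu]
    simp only [hΦ0]
    simp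
  -- intermediate value theorem
  have hwcont : Continuous fun r => (u r).im := Complex.continuous_im.comp hucont
  have hw0 : (u 0).im = 0 := by rw [hu0]; simp
  have hw1 : (u 1).im = 2*π := by rw [hu1]; simp
  have hmem : π ∈ Set.Icc ((u 0).im) ((u 1).im) := by
    rw [hw0, hw1]
    constructor
    · exact Real.pi_pos.le
    · linarith [Real.pi_pos]
  have := intermediate_value_Icc (by norm_num : (0:ℝ) ≤ 1) hwcont.continuousOn hmem
  obtain ⟨r, _, hr⟩ := this
  obtain ⟨n, hn⟩ := hint r
  have hr : (u r).im = π := hr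
  rw [hn] at hr
  have him : ((n : ℂ) * (2*π*I)).im = n * (2*π) := by
    simp [Complex.mul_im]
  rw [him] at hr
  have h2n : ((2 * n : ℝ)) = 1 := by
    apply mul_right_cancel₀ Real.pi_ne_zero
    linear_combination hr
  have : (2 * n : ℤ) = 1 := by exact_mod_cast h2n
  omega

theorem stmt_11 :
    ¬ ∃ β : Matrix (Fin 2) (Fin 2) (MvPolynomial (Fin 2) ℝ),
        β.det = 1 ∧
        β.map circleMk =
          !![circleMk (X 0), circleMk (X 1); -circleMk (X 1), circleMk (X 0)] := by
  rintro ⟨β, hdet, hmap⟩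
  rw [Matrix.det_fin_two] at hdet
  have e00 : circleMk (β 0 0) = circleMk (X 0) := by
    have := congrArg (fun M : Matrix (Fin 2) (Fin 2) _ => M 0 0) hmap
    simpa [Matrix.map_apply] using this
  have e01 : circleMk (β 0 1) = circleMk (X 1) := by
    have := congrArg (fun M : Matrix (Fin 2) (Fin 2) _ => M 0 1) hmap
    simpa [Matrix.map_apply] using this
  have hfq : ∃ q, q * circlePoly = β 0 0 - X 0 :=
    Ideal.mem_span_singleton'.mp (Ideal.Quotient.eq.mp e00)
  have hgq : ∃ q, q * circlePoly = β 0 1 - X 1 :=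
    Ideal.mem_span_singleton'.mp (Ideal.Quotient.eq.mp e01)
  obtain ⟨q1, hq1⟩ := hfq
  obtain ⟨q2, hq2⟩ := hgq
  have hcirc : ∀ θ : ℝ, eval ![Real.cos θ, Real.sin θ] circlePoly = 0 := by
    intro θ
    simp [circlePoly, Real.cos_sq_add_sin_sq]
  have hfval : ∀ θ : ℝ, eval ![Real.cos θ, Real.sin θ] (β 0 0) = Real.cos θ := by
    intro θ
    have hfe : β 0 0 = X 0 + q1 * circlePoly := by linear_combination -hq1
    rw [hfe, map_add, map_mul, hcirc θ]
    simp
  have hgval : ∀ θ : ℝ, eval ![Real.cos θ, Real.sin θ] (β 0 1) = Real.sin θ := by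
    intro θ
    have hge : β 0 1 = X 1 + q2 * circlePoly := by linear_combination -hq2
    rw [hge, map_add, map_mul, hcirc θ]
    simp
  have hnz : ∀ v : Fin 2 → ℝ, eval v (β 0 0) = 0 → eval v (β 0 1) = 0 → False := by
    intro v h0 h1
    have := congrArg (eval v) hdet
    simp only [map_sub, map_mul, map_one, h0, h1, zero_mul, sub_zero] at this
    exact zero_ne_one this
  exact winding (β 0 0) (β 0 1) hnz hfval hgval
end

section
/- (Swan–Towber) Let A be a commutative ring and (a, b, c) ∈ A³ a unimodular row. Then (a², b, c) is completable: there exists a matrix in SL_3(A) with first row (a², b, c). -/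
theorem stmt_15 {A : Type*} [CommRing A] (a b c : A)
    (h : ∃ a' b' c' : A, a * a' + b * b' + c * c' = 1) :
    ∃ M : Matrix (Fin 3) (Fin 3) A, M.det = 1 ∧ M 0 = ![a ^ 2, b, c] := by
  obtain ⟨a', b', c', h⟩ := h
  refine ⟨!![a ^ 2, b, c; -2*a*c' - b, c' ^ 2, -(b'*c') + a'; 2*a*b' - c, -(b'*c') - a', b' ^ 2], ?_, ?_⟩
  · rw [Matrix.det_fin_three]
    simp [Matrix.cons_val_zero, Matrix.cons_val_one]
    linear_combination (a*a' + b*b' + c*c' + 1) * h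
  · ext i; fin_cases i <;> simp
end
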